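/- Tail bound for the overlap integral (Beta tail): Let d ≥ 2 be a natural number, let ε ∈ (0,1], and let k be a natural number with k ≥ 4d/ε². Then C(d+k−1,k) · ∫₀^{√(1−ε²)} x^k·(d−1)·(1−x)^{d−2} dx ≤ exp(−k·ε⁴/8), where C(d+k−1,k) is the binomial coefficient and the integral is the Lebesgue integral over the real interval [0, √(1−ε²)]. -/

import Mathlib

open MeasureTheory
open scoped ENNReal Matrix InnerProductSpace

namespace Paper

noncomputable section

instance matMS (d : ℕ) : MeasurableSpace (Matrix (Fin d) (Fin d) ℂ) := borel _
instance matBS (d : ℕ) : BorelSpace (Matrix (Fin d) (Fin d) ℂ) := ⟨rfl⟩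

/-- The unitary group `U(d)`. -/
abbrev UG (d : ℕ) := Matrix.unitaryGroup (Fin d) ℂ

/-- ℓ²→ℓ² operator norm (spectral norm) of a matrix. -/
def opNorm {d : ℕ} (A : Matrix (Fin d) (Fin d) ℂ) : ℝ :=
  ‖Matrix.toEuclideanCLM (𝕜 := ℂ) A‖

/-- Phase-invariant distance on unitary channels. -/
def D {d : ℕ} (U V : UG d) : ℝ :=
  ⨅ z : {z : ℂ // ‖z‖ = 1},
    opNorm ((U : Matrix (Fin d) (Fin d) ℂ) - z.val • (V : Matrix (Fin d) (Fin d) ℂ))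

/-- Closed ball of radius `r` around `V` in `U(d)` for the distance `D`. -/
def ball {d : ℕ} (V : UG d) (r : ℝ) : Set (UG d) := {U | D U V ≤ r}

/-- Haar volume of a ball of radius `r`. -/
def Vol {d : ℕ} (μ : Measure (UG d)) (r : ℝ) : ℝ≥0∞ := μ (ball 1 r)

/-- `(α,β)`-equidistribution of `ν` at scale `ε` (relative to the Haar measure `μ`). -/
def Equidistributed {d : ℕ} (μ ν : Measure (UG d)) (α β ε : ℝ) : Prop :=
  ∀ (V : UG d) (r : ℝ), ε ≤ r →
    Vol μ (α * r) ≤ ν (ball V r) ∧ ν (ball V r) ≤ Vol μ (β * r)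

/-- Products of at most `r` elements of the gate set `𝒢`. -/
def wordsLe {d : ℕ} (𝒢 : Finset (UG d)) (r : ℕ) : Set (UG d) :=
  {W | ∃ l : List (UG d), l.length ≤ r ∧ (∀ g ∈ l, g ∈ 𝒢) ∧ l.prod = W}

/-- Convolution of two measures on a monoid: pushforward of the product measure under
multiplication. -/
def mconv {G : Type*} [Monoid G] [MeasurableSpace G] (ν ϑ : Measure G) : Measure G :=
  (ν.prod ϑ).map (fun p => p.1 * p.2)

/-- `t`-fold convolution power of a measure. -/
def convPow {G : Type*} [Monoid G] [MeasurableSpace G] (ν : Measure G) : ℕ → Measure G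
  | 0 => Measure.dirac 1
  | n + 1 => mconv (convPow ν n) ν

/-- The random walk `U_t = V_t ⋯ V_1`. -/
def walk {d : ℕ} {Ω : Type*} (V : ℕ → Ω → UG d) (t : ℕ) (ω : Ω) : UG d :=
  ((List.range t).map (fun i => V (t - i) ω)).prod

/-- Euclidean space `ℂ^d`. -/
abbrev EV (d : ℕ) := EuclideanSpace ℂ (Fin d)

instance evMS (d : ℕ) : MeasurableSpace (EV d) := borel _
instance evBS (d : ℕ) : BorelSpace (EV d) := ⟨rfl⟩

/-- Distance on pure states. -/
def dS {d : ℕ} (ψ φ : EV d) : ℝ := Real.sqrt (1 - ‖⟪ψ, φ⟫_ℂ‖ ^ 2)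

/-- Ball of radius `r` around the state `φ`, inside the set of unit vectors. -/
def ballS {d : ℕ} (φ : EV d) (r : ℝ) : Set (EV d) := {ψ | ‖ψ‖ = 1 ∧ dS ψ φ ≤ r}

/-- Action of a unitary matrix on a vector. -/
def act {d : ℕ} (U : UG d) (ψ : EV d) : EV d :=
  Matrix.toEuclideanLin (U : Matrix (Fin d) (Fin d) ℂ) ψ

/-- Topological support of a measure. -/
def msupport {X : Type*} [TopologicalSpace X] [MeasurableSpace X] (ν : Measure X) : Set X :=
  {x | ∀ U : Set X, IsOpen U → x ∈ U → ν U ≠ 0}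

/-- Packing number (as an extended nonnegative real): supremum of cardinalities of finite
subsets of `Y` whose elements are pairwise at `dist`-distance at least `ε`. -/
def Npack {X : Type*} (dist : X → X → ℝ) (Y : Set X) (ε : ℝ) : ℝ≥0∞ :=
  ⨆ (S : Finset X) (_ : ↑S ⊆ Y ∧ (S : Set X).Pairwise fun x y => ε ≤ dist x y),
    (S.card : ℝ≥0∞)

end
end Paper

namespace Paper
open ProbabilityTheory

open Finset in
private lemma pow_le_factorial_mul_exp {z : ℝ} (hz : 0 ≤ z) (m : ℕ) :
    z ^ m ≤ (m.factorial : ℝ) * Real.exp z := by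
  have h2 : z ^ m / (m.factorial : ℝ) ≤ ∑ i ∈ range (m + 1), z ^ i / (i.factorial : ℝ) :=
    Finset.single_le_sum (f := fun i => z ^ i / (i.factorial : ℝ))
      (fun i _ => by positivity) (Finset.self_mem_range_succ m)
  have h := h2.trans (Real.sum_le_exp_of_nonneg hz (m + 1))
  have hm : (0 : ℝ) < (m.factorial : ℝ) := by exact_mod_cast m.factorial_pos
  calc z ^ m = z ^ m / (m.factorial : ℝ) * (m.factorial : ℝ) := by field_simp
    _ ≤ Real.exp z * (m.factorial : ℝ) := mul_le_mul_of_nonneg_right h hm.le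
    _ = (m.factorial : ℝ) * Real.exp z := by ring

lemma one_sub_le_exp_aux {y : ℝ} (h0 : 0 ≤ y) (h1 : y ≤ 1) :
    1 - y ≤ Real.exp (-(y + y ^ 2 / 2)) := by
  have hb := Real.exp_bound (x := y) (by rwa [abs_of_nonneg h0]) (n := 3) (by norm_num)
  rw [Finset.sum_range_succ, Finset.sum_range_succ, Finset.sum_range_succ,
    Finset.sum_range_zero, abs_of_nonneg h0] at hb
  norm_num [Nat.factorial] at hb
  have hexp_le : Real.exp y ≤ 1 + y + y ^ 2 / 2 + (2 / 9) * y ^ 3 := by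
    cases abs_le.1 hb with | intro l r => nlinarith
  have h2 : (1 - y) * Real.exp y ≤ 1 - y ^ 2 / 2 := by nlinarith [Real.exp_pos y]
  have h3 : (1 : ℝ) - y ^ 2 / 2 ≤ Real.exp (-(y ^ 2 / 2)) := by
    have := Real.add_one_le_exp (-(y ^ 2 / 2)); linarith
  calc 1 - y = (1 - y) * Real.exp y * Real.exp (-y) := by
        rw [mul_assoc, ← Real.exp_add]; simp
    _ ≤ (1 - y ^ 2 / 2) * Real.exp (-y) :=
        mul_le_mul_of_nonneg_right h2 (Real.exp_pos _).le
    _ ≤ Real.exp (-(y ^ 2 / 2)) * Real.exp (-y) :=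
        mul_le_mul_of_nonneg_right h3 (Real.exp_pos _).le
    _ = Real.exp (-(y + y ^ 2 / 2)) := by rw [← Real.exp_add]; ring_nf

set_option maxHeartbeats 1600000 in
theorem stmt4 {d k : ℕ} (hd : 2 ≤ d) {ε : ℝ} (hε0 : 0 < ε) (hε1 : ε ≤ 1)
    (hk : 4 * (d : ℝ) / ε ^ 2 ≤ (k : ℝ)) :
    ((d + k - 1).choose k : ℝ) *
        ∫ x in Set.Icc (0 : ℝ) (Real.sqrt (1 - ε ^ 2)),
          x ^ k * ((d : ℝ) - 1) * (1 - x) ^ (d - 2)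
      ≤ Real.exp (-((k : ℝ) * ε ^ 4 / 8)) := by
  obtain ⟨m, rfl⟩ : ∃ m, d = m + 2 := ⟨d - 2, by omega⟩
  have hε2 : 0 < ε ^ 2 := by positivity
  have hε21 : ε ^ 2 ≤ 1 := by nlinarith
  -- basic bounds on k
  have hkd : 4 * ((m : ℝ) + 2) ≤ (k : ℝ) * ε ^ 2 := by
    rw [div_le_iff₀ hε2] at hk; push_cast at hk ⊢; linarith
  have hk4 : 4 * ((m : ℝ) + 2) ≤ (k : ℝ) := by nlinarith
  have hk0 : (0 : ℝ) < (k : ℝ) := by linarith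
  set kR : ℝ := (k : ℝ) with hkR
  set s : ℝ := Real.sqrt (1 - ε ^ 2) with hsdef
  have hs0 : 0 ≤ s := Real.sqrt_nonneg _
  have hs_le : s ≤ 1 - ε ^ 2 / 2 := by
    rw [hsdef, show (1 : ℝ) - ε ^ 2 / 2 = Real.sqrt ((1 - ε ^ 2 / 2) ^ 2) from
      (Real.sqrt_sq (by nlinarith)).symm]
    exact Real.sqrt_le_sqrt (by nlinarith)
  have hs1 : s ≤ 1 := by nlinarith
  set B : ℝ := Real.exp (-(kR * ε ^ 4 / 8)) * ((m + 1).factorial : ℝ) * (2 / kR) ^ m with hB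
  have hB0 : 0 ≤ B := by positivity
  -- pointwise bound on the integrand
  have hpt : ∀ x ∈ Set.Icc (0 : ℝ) s,
      x ^ k * ((↑(m + 2) : ℝ) - 1) * (1 - x) ^ (m + 2 - 2)
        ≤ B * Real.exp (kR * (x - 1) / 2) := by
    rintro x ⟨hx0, hxs⟩
    have hx1 : x ≤ 1 := hxs.trans hs1
    set y : ℝ := 1 - x with hy
    have hy0 : 0 ≤ y := by simp [hy]; linarith
    have hy1 : y ≤ 1 := by simp [hy]; linarith
    have hyu : ε ^ 2 / 2 ≤ y := by simp only [hy]; linarith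
    -- x^k bound
    have h1 : x ^ k ≤ Real.exp (-(kR * ε ^ 4 / 8)) * Real.exp (-(kR * y) / 2) *
        Real.exp (-(kR * y) / 2) := by
      have hxle : x ≤ Real.exp (-(y + y ^ 2 / 2)) := by
        have := one_sub_le_exp_aux hy0 hy1
        simpa [hy] using this
      calc x ^ k ≤ Real.exp (-(y + y ^ 2 / 2)) ^ k := pow_le_pow_left₀ hx0 hxle k
        _ = Real.exp (kR * -(y + y ^ 2 / 2)) := by rw [← Real.exp_nat_mul]
        _ = Real.exp (-(kR * y ^ 2 / 2)) * Real.exp (-(kR * y) / 2) *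
            Real.exp (-(kR * y) / 2) := by rw [← Real.exp_add, ← Real.exp_add]; ring_nf
        _ ≤ Real.exp (-(kR * ε ^ 4 / 8)) * Real.exp (-(kR * y) / 2) *
            Real.exp (-(kR * y) / 2) := by
            have hy2 : ε ^ 4 / 4 ≤ y ^ 2 := by nlinarith [sq_nonneg (y - ε ^ 2 / 2)]
            have harg : kR * ε ^ 4 / 8 ≤ kR * y ^ 2 / 2 := by nlinarith
            have hle : Real.exp (-(kR * y ^ 2 / 2)) ≤ Real.exp (-(kR * ε ^ 4 / 8)) :=
              Real.exp_le_exp.2 (by linarith)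
            exact mul_le_mul_of_nonneg_right
              (mul_le_mul_of_nonneg_right hle (Real.exp_pos _).le) (Real.exp_pos _).le
    -- (1-x)^m bound
    have h3 : ((m : ℝ) + 1) * y ^ m ≤
        ((m + 1).factorial : ℝ) * (2 / kR) ^ m * Real.exp (kR * y / 2) := by
      have hz : (0 : ℝ) ≤ kR * y / 2 := by positivity
      have hfac := pow_le_factorial_mul_exp hz m
      have hym : y ^ m = (2 / kR) ^ m * (kR * y / 2) ^ m := by
        rw [← mul_pow]; congr 1; field_simp
      calc ((m : ℝ) + 1) * y ^ m
          = ((m : ℝ) + 1) * ((2 / kR) ^ m * (kR * y / 2) ^ m) := by rw [hym]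
        _ ≤ ((m : ℝ) + 1) * ((2 / kR) ^ m * ((m.factorial : ℝ) * Real.exp (kR * y / 2))) := by
            gcongr
        _ = ((m + 1).factorial : ℝ) * (2 / kR) ^ m * Real.exp (kR * y / 2) := by
            rw [Nat.factorial_succ]; push_cast; ring
    have key : x ^ k * (((m : ℝ) + 1) * y ^ m) ≤
        (Real.exp (-(kR * ε ^ 4 / 8)) * Real.exp (-(kR * y) / 2) * Real.exp (-(kR * y) / 2)) *
        (((m + 1).factorial : ℝ) * (2 / kR) ^ m * Real.exp (kR * y / 2)) :=
      mul_le_mul h1 h3 (by positivity) (by positivity)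
    calc x ^ k * ((↑(m + 2) : ℝ) - 1) * (1 - x) ^ (m + 2 - 2)
        = x ^ k * (((m : ℝ) + 1) * y ^ m) := by push_cast [hy]; ring
      _ ≤ _ := key
      _ = B * Real.exp (kR * (x - 1) / 2) := by
          have hE : Real.exp (-(kR * y) / 2) * Real.exp (kR * y / 2) = 1 := by
            rw [← Real.exp_add, show -(kR * y) / 2 + kR * y / 2 = 0 from by ring,
              Real.exp_zero]
          have hE2 : Real.exp (-(kR * y) / 2) = Real.exp (kR * (x - 1) / 2) := by
            congr 1; simp only [hy]; ring
          calc (Real.exp (-(kR * ε ^ 4 / 8)) * Real.exp (-(kR * y) / 2) *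
                Real.exp (-(kR * y) / 2)) *
              (((m + 1).factorial : ℝ) * (2 / kR) ^ m * Real.exp (kR * y / 2))
              = (Real.exp (-(kR * ε ^ 4 / 8)) * ((m + 1).factorial : ℝ) * (2 / kR) ^ m) *
                Real.exp (-(kR * y) / 2) *
                (Real.exp (-(kR * y) / 2) * Real.exp (kR * y / 2)) := by ring
            _ = B * Real.exp (kR * (x - 1) / 2) := by rw [hE, mul_one, hE2, hB]
  -- integrability
  have hcont1 : Continuous fun x : ℝ => x ^ k * ((↑(m + 2) : ℝ) - 1) * (1 - x) ^ (m + 2 - 2) := by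
    fun_prop
  have hcont2 : Continuous fun x : ℝ => B * Real.exp (kR * (x - 1) / 2) := by fun_prop
  have hint1 := hcont1.integrableOn_Icc (a := 0) (b := s) (μ := volume)
  have hint2 := hcont2.integrableOn_Icc (a := 0) (b := s) (μ := volume)
  -- integral comparison
  have hmono := setIntegral_mono_on hint1 hint2 measurableSet_Icc hpt
  -- compute the exponential integral
  have hderiv : ∀ x ∈ Set.uIcc (0 : ℝ) s, HasDerivAt
      (fun x => (2 / kR) * Real.exp (kR * (x - 1) / 2)) (Real.exp (kR * (x - 1) / 2)) x := by
    intro x _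
    have h1 : HasDerivAt (fun x : ℝ => kR * (x - 1) / 2) (kR / 2) x := by
      simpa using (((hasDerivAt_id x).sub_const 1).const_mul kR).div_const 2
    have := (h1.exp).const_mul (2 / kR)
    refine this.congr_deriv ?_
    field_simp
  have hJ : ∫ x in (0:ℝ)..s, Real.exp (kR * (x - 1) / 2)
      = (2 / kR) * Real.exp (kR * (s - 1) / 2) - (2 / kR) * Real.exp (kR * ((0:ℝ) - 1) / 2) := by
    have := intervalIntegral.integral_eq_sub_of_hasDerivAt hderiv
      ((by fun_prop : Continuous fun x : ℝ => Real.exp (kR * (x - 1) / 2)).intervalIntegrable 0 s)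
    simpa using this
  have hIcc_eq : ∫ x in Set.Icc (0:ℝ) s, Real.exp (kR * (x - 1) / 2)
      = ∫ x in (0:ℝ)..s, Real.exp (kR * (x - 1) / 2) := by
    rw [intervalIntegral.integral_of_le hs0, integral_Icc_eq_integral_Ioc]
  have hJle : ∫ x in Set.Icc (0:ℝ) s, Real.exp (kR * (x - 1) / 2)
      ≤ (2 / kR) * Real.exp (kR * (s - 1) / 2) := by
    rw [hIcc_eq, hJ]
    have : 0 < (2 / kR) * Real.exp (kR * ((0:ℝ) - 1) / 2) := by positivity
    linarith
  -- bound the full integral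
  have hI : ∫ x in Set.Icc (0:ℝ) s, x ^ k * ((↑(m + 2) : ℝ) - 1) * (1 - x) ^ (m + 2 - 2)
      ≤ B * ((2 / kR) * Real.exp (kR * (s - 1) / 2)) := by
    refine hmono.trans ?_
    rw [integral_const_mul]
    exact mul_le_mul_of_nonneg_left hJle hB0
  -- final numeric bound
  have hCm : (m + 2 + k - 1).choose k = (m + k + 1).choose (m + 1) := by
    rw [show m + 2 + k - 1 = k + (m + 1) from by omega]
    rw [Nat.choose_symm_add]
    congr 1; omega
  have hC0 : (0:ℝ) ≤ ((m + 2 + k - 1).choose k : ℝ) := by positivity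
  have hCle : ((m + 2 + k - 1).choose k : ℝ) * ((m + 1).factorial : ℝ)
      ≤ ((m : ℝ) + (k : ℝ) + 1) ^ (m + 1) := by
    rw [hCm]
    have hfp : (0:ℝ) < ((m + 1).factorial : ℝ) := by exact_mod_cast (m + 1).factorial_pos
    have h := Nat.choose_le_pow_div (α := ℝ) (m + 1) (m + k + 1)
    rw [le_div_iff₀ hfp] at h
    calc ((m + k + 1).choose (m + 1) : ℝ) * ((m + 1).factorial : ℝ)
        ≤ ((m + k + 1 : ℕ) : ℝ) ^ (m + 1) := by exact_mod_cast h
      _ = ((m : ℝ) + (k : ℝ) + 1) ^ (m + 1) := by push_cast; ring_nf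
  have hfrac : ((m : ℝ) + (k : ℝ) + 1) * (2 / kR) ≤ 5 / 2 := by
    rw [mul_div_assoc', div_le_iff₀ hk0]
    nlinarith
  have hexp1 : (5 / 2 : ℝ) ≤ Real.exp 1 := by
    have := Real.exp_one_gt_d9; linarith
  have hbracket : ((m + 2 + k - 1).choose k : ℝ) * ((m + 1).factorial : ℝ) * (2 / kR) ^ (m + 1)
      * Real.exp (kR * (s - 1) / 2) ≤ 1 := by
    have e1 : ((m + 2 + k - 1).choose k : ℝ) * ((m + 1).factorial : ℝ) * (2 / kR) ^ (m + 1)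
        ≤ (((m : ℝ) + (k : ℝ) + 1) * (2 / kR)) ^ (m + 1) := by
      rw [mul_pow]
      exact mul_le_mul_of_nonneg_right hCle (by positivity)
    have e2 : (((m : ℝ) + (k : ℝ) + 1) * (2 / kR)) ^ (m + 1) ≤ Real.exp 1 ^ (m + 1) := by
      apply pow_le_pow_left₀ (by positivity) (hfrac.trans hexp1)
    have e3 : Real.exp 1 ^ (m + 1) = Real.exp ((m : ℝ) + 1) := by
      rw [← Real.exp_nat_mul]; push_cast; ring_nf
    have e4 : Real.exp ((m : ℝ) + 1) * Real.exp (kR * (s - 1) / 2) ≤ 1 := by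
      rw [← Real.exp_add]
      have harg : (m : ℝ) + 1 + kR * (s - 1) / 2 ≤ 0 := by
        nlinarith [mul_le_mul_of_nonneg_left (by linarith : ε ^ 2 / 2 ≤ 1 - s) hk0.le]
      calc Real.exp ((m : ℝ) + 1 + kR * (s - 1) / 2) ≤ Real.exp 0 := Real.exp_le_exp.2 harg
        _ = 1 := Real.exp_zero
    calc ((m + 2 + k - 1).choose k : ℝ) * ((m + 1).factorial : ℝ) * (2 / kR) ^ (m + 1)
        * Real.exp (kR * (s - 1) / 2)
        ≤ (((m : ℝ) + (k : ℝ) + 1) * (2 / kR)) ^ (m + 1) * Real.exp (kR * (s - 1) / 2) :=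
          mul_le_mul_of_nonneg_right e1 (Real.exp_pos _).le
      _ ≤ Real.exp 1 ^ (m + 1) * Real.exp (kR * (s - 1) / 2) :=
          mul_le_mul_of_nonneg_right e2 (Real.exp_pos _).le
      _ ≤ 1 := by rw [e3]; exact e4
  calc ((m + 2 + k - 1).choose k : ℝ) *
        ∫ x in Set.Icc (0 : ℝ) s, x ^ k * ((↑(m + 2) : ℝ) - 1) * (1 - x) ^ (m + 2 - 2)
      ≤ ((m + 2 + k - 1).choose k : ℝ) * (B * ((2 / kR) * Real.exp (kR * (s - 1) / 2))) :=
        mul_le_mul_of_nonneg_left hI hC0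
    _ = Real.exp (-(kR * ε ^ 4 / 8)) * (((m + 2 + k - 1).choose k : ℝ) *
        ((m + 1).factorial : ℝ) * (2 / kR) ^ (m + 1) * Real.exp (kR * (s - 1) / 2)) := by
        rw [hB, pow_succ]; ring
    _ ≤ Real.exp (-(kR * ε ^ 4 / 8)) * 1 :=
        mul_le_mul_of_nonneg_left hbracket (Real.exp_pos _).le
    _ = Real.exp (-(kR * ε ^ 4 / 8)) := mul_one _

end Paper
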